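/- Let R be a finite commutative chain ring with maximal ideal ⟨γ⟩, nilpotency index t, and residue field of cardinality q. Let λ be a unit of R and n a positive integer with gcd(n, q) = 1, so that X^n − λ = f_1⋯f_r with f_i monic basic irreducible pairwise coprime, and let {e_1, …, e_r} be the complete set of primitive pairwise orthogonal idempotents of R[x] = R[X]/⟨X^n − λ⟩ with e_i in the ideal generated by the image of (X^n − λ)/f_i. Then for every ideal C of R[x] there exists a unique tuple of integers (s_1, …, s_r) with 0 ≤ s_i ≤ t such that C is the internal direct sum C = γ^{s_1}·e_1·R[x] ⊕ ⋯ ⊕ γ^{s_r}·e_r·R[x]. -/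

import Mathlib

open Polynomial

section Defs

variable {R : Type*}

/-- An idempotent `e` of a commutative ring is *primitive* if it is nonzero and cannot be
written as a sum of two nonzero orthogonal idempotents. -/
def IsPrimitiveIdem [CommRing R] (e : R) : Prop :=
  IsIdempotentElem e ∧ e ≠ 0 ∧
    ∀ u v : R, IsIdempotentElem u → IsIdempotentElem v → u * v = 0 → e = u + v →
      u = 0 ∨ v = 0

/-- A family of idempotents forming a complete set of pairwise orthogonal idempotents. -/
def IsCompleteOrthoIdem [CommRing R] {r : ℕ} (e : Fin r → R) : Prop :=
  (∀ i, IsIdempotentElem (e i)) ∧ (∑ i, e i) = 1 ∧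
    ∀ i j, i ≠ j → e i * e j = 0

/-- A complete set of pairwise orthogonal primitive idempotents. -/
def IsCompletePrimIdem [CommRing R] {r : ℕ} (e : Fin r → R) : Prop :=
  IsCompleteOrthoIdem e ∧ ∀ i, IsPrimitiveIdem (e i)

/-- The `lam`-constacyclic shift `(a_0, …, a_(n-1)) ↦ (lam·a_(n-1), a_0, …, a_(n-2))`. -/
def ctShift [CommRing R] {n : ℕ} [NeZero n] (lam : R) (a : Fin n → R) : Fin n → R :=
  fun i => if i = 0 then lam * a (i - 1) else a (i - 1)

/-- The dual code of a linear code of length `n` over `R`. -/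
def dualCode [CommRing R] {n : ℕ} (Ccode : Submodule R (Fin n → R)) :
    Submodule R (Fin n → R) where
  carrier := {a | ∀ b ∈ Ccode, ∑ i, a i * b i = 0}
  add_mem' := by
    intro a a' ha ha' b hb
    simpa [add_mul, Finset.sum_add_distrib] using by rw [ha b hb, ha' b hb, add_zero]
  zero_mem' := by intro b hb; simp
  smul_mem' := by
    intro c a ha b hb
    simpa [Finset.mul_sum, mul_assoc] using by rw [← Finset.mul_sum, ha b hb, mul_zero]

/-- The linear map `(a_0, …, a_(n-1)) ↦ a_0 + a_1 x + ⋯ + a_(n-1) x^(n-1)` from `R^n` to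
`R[X]/⟨g⟩`. -/
noncomputable def polyLin [CommRing R] (n : ℕ) (g : R[X]) :
    (Fin n → R) →ₗ[R] (R[X] ⧸ Ideal.span {g}) where
  toFun a := Ideal.Quotient.mk _ (∑ i, C (a i) * X ^ (i : ℕ))
  map_add' a b := by
    simp only [Pi.add_apply, map_add, add_mul, Finset.sum_add_distrib]
  map_smul' c a := by
    simp only [Pi.smul_apply, smul_eq_mul, RingHom.id_apply]
    have h : (∑ i : Fin n, C (c * a i) * X ^ (i : ℕ))
        = c • ∑ i : Fin n, C (a i) * X ^ (i : ℕ) := by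
      rw [Finset.smul_sum]
      exact Finset.sum_congr rfl fun i _ => by
        rw [Polynomial.smul_eq_C_mul, ← mul_assoc, ← C_mul]
    rw [h]
    exact (Submodule.Quotient.mk_smul (Ideal.span {g}) c
      (∑ i : Fin n, C (a i) * X ^ (i : ℕ))).symm

/-- The linear code of length `n` corresponding to an ideal of `R[X]/⟨g⟩` under the usual
identification. -/
noncomputable def idealCode [CommRing R] (n : ℕ) (g : R[X])
    (I : Ideal (R[X] ⧸ Ideal.span {g})) : Submodule R (Fin n → R) :=
  (Submodule.restrictScalars R (I : Submodule (R[X] ⧸ Ideal.span {g}) (R[X] ⧸ Ideal.span {g}))).comap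
    (polyLin n g)

/-- The reciprocal `f* = a_0 x^(n-1) + a_1 x^(n-2) + ⋯ + a_(n-1)` of an element
`f = a_0 + a_1 x + ⋯ + a_(n-1) x^(n-1)` of `R[X]/⟨g⟩`, viewed in `R[X]/⟨h⟩`; the canonical
representative of degree `< n` is obtained by reduction `%ₘ g` of any representative. -/
noncomputable def recip [CommRing R] (n : ℕ) (g h : R[X]) (f : R[X] ⧸ Ideal.span {g}) :
    R[X] ⧸ Ideal.span {h} :=
  Ideal.Quotient.mk _ (((Ideal.Quotient.mk_surjective f).choose %ₘ g).reflect (n - 1))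

/-- The code `c·R^n = {(c·b_0, …, c·b_(n-1)) : b ∈ R^n}`. -/
def scalarCode [CommRing R] (n : ℕ) (c : R) : Submodule R (Fin n → R) where
  carrier := {a | ∀ i, ∃ b, a i = c * b}
  add_mem' := by
    intro a a' ha ha' i
    obtain ⟨b, hb⟩ := ha i; obtain ⟨b', hb'⟩ := ha' i
    exact ⟨b + b', by simp [hb, hb', mul_add]⟩
  zero_mem' := fun i => ⟨0, by simp⟩
  smul_mem' := by
    intro r a ha i
    obtain ⟨b, hb⟩ := ha i
    exact ⟨r * b, by simp [hb]; ring⟩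

end Defs



section AuxCCUD

/-- In a commutative ring where `g` is nilpotent and everything outside `span {g}` is a unit,
every ideal is a power of `span {g}`. -/
lemma auxCCUD_chain_classify {B : Type*} [CommRing B] {g : B} {t : ℕ}
    (hg : g ^ t = 0) (hu : ∀ x : B, x ∉ Ideal.span {g} → IsUnit x)
    (J : Ideal B) : ∃ s, s ≤ t ∧ J = Ideal.span {g ^ s} := by
  classical
  have hPt : g ^ t ∈ J := by rw [hg]; exact J.zero_mem
  have hP : ∃ m, g ^ m ∈ J := ⟨t, hPt⟩
  refine ⟨Nat.find hP, Nat.find_min' hP hPt, le_antisymm ?_ ?_⟩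
  · intro x hx
    by_cases hx0 : x = 0
    · simp [hx0]
    have hQ0 : x ∈ Ideal.span {g ^ 0} := by
      simp [Ideal.span_singleton_one]
    set Q := fun m => x ∈ Ideal.span {g ^ m} with hQdef
    set m := Nat.findGreatest Q t with hmdef
    have hmt : m ≤ t := Nat.findGreatest_le t
    have hQm : Q m := Nat.findGreatest_spec (Nat.zero_le t) hQ0
    have hmlt : m < t := by
      rcases lt_or_eq_of_le hmt with h | h
      · exact h
      · exfalso
        apply hx0
        have h2 : x ∈ Ideal.span {g ^ t} := by rw [← h]; exact hQm
        obtain ⟨c, hc⟩ := Ideal.mem_span_singleton'.1 h2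
        rw [← hc, hg, mul_zero]
    obtain ⟨y, hy⟩ := Ideal.mem_span_singleton'.1 hQm
    -- hy : y * g ^ m = x
    have hyu : IsUnit y := by
      apply hu
      intro hy'
      obtain ⟨z, hz⟩ := Ideal.mem_span_singleton'.1 hy'
      have : Q (m + 1) := Ideal.mem_span_singleton'.2 ⟨z, by
        rw [pow_succ, ← hy, ← hz]; ring⟩
      exact Nat.findGreatest_is_greatest (Nat.lt_succ_self m) (Nat.succ_le_of_lt hmlt) this
    obtain ⟨u, hu'⟩ := hyu
    have hgm : g ^ m ∈ J := by
      have h3 : g ^ m = ↑u⁻¹ * x := by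
        rw [← hy, ← hu', ← mul_assoc, Units.inv_mul, one_mul]
      rw [h3]
      exact Ideal.mul_mem_left _ _ hx
    have hfind : Nat.find hP ≤ m := Nat.find_min' hP hgm
    refine Ideal.mem_span_singleton'.2 ⟨y * g ^ (m - Nat.find hP), ?_⟩
    rw [mul_assoc, ← pow_add, Nat.sub_add_cancel hfind, hy]
  · rw [Ideal.span_le, Set.singleton_subset_iff]
    exact Nat.find_spec hP

/-- If `B` maps onto a field with kernel inside `span {g}` with `g` nilpotent, then everything
outside `span {g}` is a unit. -/
lemma auxCCUD_local_of_field_quot {B K : Type*} [CommRing B] [Field K]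
    (ψ : B →+* K) (hsurj : Function.Surjective ψ) {g : B} {t : ℕ} (hg : g ^ t = 0)
    (hker : ∀ x, ψ x = 0 → x ∈ Ideal.span {g}) :
    ∀ x : B, x ∉ Ideal.span {g} → IsUnit x := by
  intro x hx
  have hψx : ψ x ≠ 0 := fun h => hx (hker x h)
  obtain ⟨y, hy⟩ := hsurj (ψ x)⁻¹
  have h0 : ψ (x * y - 1) = 0 := by
    rw [map_sub, map_mul, hy, map_one, mul_inv_cancel₀ hψx, sub_self]
  obtain ⟨c, hc⟩ := Ideal.mem_span_singleton'.1 (hker _ h0)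
  have hxy : x * y = 1 + c * g := by linear_combination -hc
  have hnilc : IsNilpotent (c * g) := ⟨t, by rw [mul_pow, hg, mul_zero]⟩
  have hun : IsUnit (x * y) := by rw [hxy]; exact hnilc.isUnit_one_add
  exact isUnit_of_mul_isUnit_left hun

/-- Strictness of the chain `span {g ^ s}` for `s ≤ t`. -/
lemma auxCCUD_span_pow_inj {B : Type*} [CommRing B] {g : B} {t : ℕ}
    (hg : g ^ t = 0) (hnz : ∀ s, s < t → g ^ s ≠ 0) {s s' : ℕ} (hs : s ≤ t) (hs' : s' ≤ t)
    (h : Ideal.span {g ^ s} = Ideal.span {g ^ s'}) : s = s' := by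
  have key : ∀ a b : ℕ, a < b → b ≤ t →
      Ideal.span {g ^ a} ≠ Ideal.span {g ^ b} := by
    intro a b hab hbt hEq
    have hma : g ^ a ∈ Ideal.span {g ^ b} := by
      rw [← hEq]; exact Ideal.mem_span_singleton'.2 ⟨1, one_mul _⟩
    obtain ⟨c, hc⟩ := Ideal.mem_span_singleton'.1 hma
    have hb : g ^ b = g ^ a * g ^ (b - a) := by
      rw [← pow_add, Nat.add_sub_cancel' hab.le]
    have h1 : g ^ a * (1 - c * g ^ (b - a)) = 0 := by
      rw [mul_sub, mul_one]
      rw [hb] at hc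
      linear_combination -hc
    have hnil : IsNilpotent (c * g ^ (b - a)) := by
      refine ⟨t, ?_⟩
      have h2 : (g ^ (b - a)) ^ t = 0 := by
        have hba : 1 ≤ b - a := Nat.le_sub_of_add_le (by omega)
        have : (g ^ (b - a)) ^ t = g ^ t * g ^ ((b - a) * t - t) := by
          rw [← pow_mul, ← pow_add]
          congr 1
          have : t ≤ (b - a) * t := Nat.le_mul_of_pos_left t (by omega)
          omega
        rw [this, hg, zero_mul]
      rw [mul_pow, h2, mul_zero]
    have hun : IsUnit (1 - c * g ^ (b - a)) := hnil.isUnit_one_sub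
    have hga : g ^ a = 0 := by
      obtain ⟨u, hu⟩ := hun
      have := congrArg (· * (↑u⁻¹ : B)) h1
      simpa [← hu, mul_assoc, Units.mul_inv, zero_mul] using this
    exact hnz a (lt_of_lt_of_le hab hbt) hga
  rcases lt_trichotomy s s' with h1 | h1 | h1
  · exact absurd h (key s s' h1 hs')
  · exact h1
  · exact absurd h.symm (key s' s h1 hs)

end AuxCCUD

section AuxCCUD2

/-- A nonzero constant is nonzero in the quotient by a monic polynomial of positive degree. -/
lemma auxCCUD_C_ne_zero {R : Type*} [CommRing R] {f : R[X]} (hf : f.Monic)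
    (hdeg : 0 < f.natDegree) {a : R} (ha : a ≠ 0) :
    Ideal.Quotient.mk (Ideal.span {f}) (C a) ≠ 0 := by
  intro h
  rw [Ideal.Quotient.eq_zero_iff_mem, Ideal.mem_span_singleton] at h
  obtain ⟨b, hb⟩ := h
  rcases eq_or_ne b 0 with rfl | hb0
  · rw [mul_zero] at hb
    exact ha (by simpa using hb)
  · have hlc : f.leadingCoeff * b.leadingCoeff ≠ 0 := by
      rw [hf.leadingCoeff, one_mul]
      exact leadingCoeff_ne_zero.2 hb0
    have h1 : (f * b).natDegree = f.natDegree + b.natDegree := natDegree_mul' hlc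
    have h2 : (C a).natDegree = 0 := natDegree_C a
    rw [← hb, h2] at h1
    omega

/-- Two ideals below `span {E}` agree if their images agree, provided the map kills no
nonzero element of `span {E}`. -/
lemma auxCCUD_ideal_eq_of_map_eq {A B : Type*} [CommRing A] [CommRing B]
    (p : A →+* B) {E : A} {D₁ D₂ : Ideal A}
    (h1 : D₁ ≤ Ideal.span {E}) (h2 : D₂ ≤ Ideal.span {E})
    (hker : ∀ x ∈ Ideal.span {E}, p x = 0 → x = 0)
    (hsurj : Function.Surjective p)
    (h : Ideal.map p D₁ = Ideal.map p D₂) : D₁ = D₂ := by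
  have key : ∀ (D D' : Ideal A), D ≤ Ideal.span {E} → D' ≤ Ideal.span {E} →
      Ideal.map p D ≤ Ideal.map p D' → D ≤ D' := by
    intro D D' hD hD' hle x hx
    have hpx : p x ∈ Ideal.map p D' := hle (Ideal.mem_map_of_mem p hx)
    obtain ⟨y, hy, hpy⟩ := (Ideal.mem_map_iff_of_surjective p hsurj).1 hpx
    have hxy : x - y = 0 := by
      refine hker _ (Ideal.sub_mem _ (hD hx) (hD' hy)) ?_
      rw [map_sub, hpy, sub_self]
    rwa [sub_eq_zero.1 hxy]
  exact le_antisymm (key _ _ h1 h2 h.le) (key _ _ h2 h1 h.ge)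

end AuxCCUD2

section AuxCCUD3

open IsLocalRing

/-- The key structure of `R[X]/(fᵢ)` for a basic irreducible `fᵢ` over a chain ring. -/
lemma auxCCUD_component {R : Type*} [CommRing R] [IsLocalRing R]
    {γ : R} {t : ℕ} (hmax : IsLocalRing.maximalIdeal R = Ideal.span {γ})
    (hnil : γ ^ t = 0) (hnil' : γ ^ (t - 1) ≠ 0)
    {fi : R[X]} (hm : fi.Monic) (hirr : Irreducible (fi.map (IsLocalRing.residue R))) :
    ((Ideal.Quotient.mk (Ideal.span {fi}) (C γ)) ^ t = 0)
    ∧ (∀ s, s < t → (Ideal.Quotient.mk (Ideal.span {fi}) (C γ)) ^ s ≠ 0)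
    ∧ (∀ J : Ideal (R[X] ⧸ Ideal.span {fi}),
        ∃ s, s ≤ t ∧ J = Ideal.span {(Ideal.Quotient.mk (Ideal.span {fi}) (C γ)) ^ s}) := by
  have ht1 : 1 ≤ t := by
    by_contra h
    have : t = 0 := by omega
    subst this
    rw [pow_zero] at hnil
    exact one_ne_zero hnil
  set mkB := Ideal.Quotient.mk (Ideal.span {fi}) with hmkB
  have hγBt : (mkB (C γ)) ^ t = 0 := by
    rw [← map_pow, ← C_pow, hnil, map_zero, map_zero]
  -- degree of fi is positive
  have hdeg : 0 < fi.natDegree := by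
    rcases Nat.eq_zero_or_pos fi.natDegree with h | h
    swap
    · exact h
    · exfalso
      apply hirr.not_isUnit
      have hmm : (fi.map (residue R)).Monic := hm.map _
      have : (fi.map (residue R)).natDegree = 0 := by
        rw [hm.natDegree_map]; exact h
      rw [hmm.natDegree_eq_zero.1 this]
      exact isUnit_one
  -- the residue field quotient
  haveI hKmax : (Ideal.span {fi.map (residue R)}).IsMaximal :=
    PrincipalIdealRing.isMaximal_of_irreducible hirr
  letI : Field ((ResidueField R)[X] ⧸ Ideal.span {fi.map (residue R)}) :=
    Ideal.Quotient.field _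
  set Φ : R[X] →+* (ResidueField R)[X] ⧸ Ideal.span {fi.map (residue R)} :=
    (Ideal.Quotient.mk (Ideal.span {fi.map (residue R)})).comp (mapRingHom (residue R))
    with hΦdef
  have hΦ0 : ∀ a ∈ Ideal.span {fi}, Φ a = 0 := by
    intro a ha
    obtain ⟨c, hc⟩ := Ideal.mem_span_singleton.1 ha
    rw [hc, map_mul]
    have h1 : Φ fi = 0 := by
      rw [hΦdef, RingHom.comp_apply, coe_mapRingHom, Ideal.Quotient.eq_zero_iff_mem]
      exact Ideal.subset_span rfl
    rw [h1, zero_mul]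
  set ψ := Ideal.Quotient.lift (Ideal.span {fi}) Φ hΦ0 with hψdef
  have hψmk : ∀ a : R[X], ψ (mkB a) = Φ a := fun a => Ideal.Quotient.lift_mk _ _ _
  have hψs : Function.Surjective ψ := by
    intro z
    obtain ⟨pb, rfl⟩ := Ideal.Quotient.mk_surjective z
    obtain ⟨p, rfl⟩ := Polynomial.map_surjective _ residue_surjective pb
    exact ⟨mkB p, hψmk p⟩
  have hψk : ∀ x, ψ x = 0 → x ∈ Ideal.span {mkB (C γ)} := by
    intro x hx
    obtain ⟨a, rfl⟩ := Ideal.Quotient.mk_surjective (I := Ideal.span {fi}) x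
    rw [hψmk] at hx
    have hx2 : (a.map (residue R)) ∈ Ideal.span {fi.map (residue R)} := by
      rwa [hΦdef, RingHom.comp_apply, coe_mapRingHom, Ideal.Quotient.eq_zero_iff_mem] at hx
    obtain ⟨cb, hcb⟩ := Ideal.mem_span_singleton.1 hx2
    obtain ⟨c, rfl⟩ := Polynomial.map_surjective _ residue_surjective cb
    have hmap0 : (a - fi * c).map (residue R) = 0 := by
      rw [Polynomial.map_sub, Polynomial.map_mul, hcb, sub_self]
    have hdvd : C γ ∣ (a - fi * c) := by
      rw [C_dvd_iff_dvd_coeff]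
      intro j
      rw [← Ideal.mem_span_singleton, ← hmax]
      have : ((a - fi * c).map (residue R)).coeff j = 0 := by rw [hmap0]; simp
      rw [coeff_map] at this
      exact Ideal.Quotient.eq_zero_iff_mem.1 this
    obtain ⟨w, hw⟩ := hdvd
    have ha : a = fi * c + C γ * w := by linear_combination hw
    rw [ha, map_add, map_mul, map_mul]
    have : mkB fi = 0 := Ideal.Quotient.eq_zero_iff_mem.2 (Ideal.subset_span rfl)
    rw [this, zero_mul, zero_add]
    exact Ideal.mul_mem_right _ _ (Ideal.subset_span rfl)
  have hu := auxCCUD_local_of_field_quot ψ hψs hγBt hψk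
  refine ⟨hγBt, ?_, auxCCUD_chain_classify hγBt hu⟩
  intro s hst
  have hγs : γ ^ s ≠ 0 := by
    intro h0
    apply hnil'
    have : γ ^ (t - 1) = γ ^ s * γ ^ (t - 1 - s) := by
      rw [← pow_add]; congr 1; omega
    rw [this, h0, zero_mul]
  have := auxCCUD_C_ne_zero hm hdeg hγs
  rwa [← map_pow, ← C_pow]

set_option maxHeartbeats 1000000 in
set_option synthInstance.maxHeartbeats 400000 in
/-- Every ideal of `R[X]/⟨Xⁿ - λ⟩` over a finite chain ring decomposes uniquely as the
internal direct sum `⊕ γ^{sᵢ}·eᵢ·R[x]` with `0 ≤ sᵢ ≤ t`. -/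
theorem constacyclic_code_unique_decomposition
    {R : Type*} [CommRing R] [Finite R] [IsLocalRing R]
    (γ : R) (t : ℕ)
    (hmax : IsLocalRing.maximalIdeal R = Ideal.span {γ})
    (hnil : γ ^ t = 0) (hnil' : γ ^ (t - 1) ≠ 0)
    (q : ℕ) (hq : q = Nat.card (IsLocalRing.ResidueField R))
    (lam : R) (hlam : IsUnit lam)
    (n : ℕ) (hn : 0 < n) (hgcd : Nat.gcd n q = 1)
    {r : ℕ} (f : Fin r → Polynomial R)
    (hmonic : ∀ i, (f i).Monic)
    (hbasic : ∀ i, Irreducible ((f i).map (IsLocalRing.residue R)))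
    (hcoprime : ∀ i j, i ≠ j → IsCoprime (f i) (f j))
    (hprod : (∏ i, f i) = X ^ n - C lam)
    (e : Fin r → (Polynomial R ⧸ Ideal.span {X ^ n - C lam}))
    (he : IsCompletePrimIdem e)
    (hmem : ∀ i, e i ∈ Ideal.span {Ideal.Quotient.mk (Ideal.span {X ^ n - C lam})
      (∏ j ∈ Finset.univ.erase i, f j)})
    (Ccode : Ideal (Polynomial R ⧸ Ideal.span {X ^ n - C lam})) :
    ∃! s : Fin r → ℕ, (∀ i, s i ≤ t) ∧
      iSupIndep (fun i => Ideal.span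
        {(Ideal.Quotient.mk (Ideal.span {X ^ n - C lam}) (C γ)) ^ s i * e i}) ∧
      Ccode = ⨆ i, Ideal.span
        {(Ideal.Quotient.mk (Ideal.span {X ^ n - C lam}) (C γ)) ^ s i * e i} := by
  classical
  obtain ⟨⟨hidem, hsum, horth⟩, -⟩ := he
  set mkA := Ideal.Quotient.mk (Ideal.span {X ^ n - C lam}) with hmkA
  set γ' := mkA (C γ) with hγ'
  -- divisibility facts
  have hprodi : ∀ i : Fin r, f i * ∏ j ∈ Finset.univ.erase i, f j = X ^ n - C lam := by
    intro i
    rw [Finset.mul_prod_erase Finset.univ f (Finset.mem_univ i), hprod]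
  have hdvd : ∀ i, f i ∣ X ^ n - C lam := fun i => ⟨_, (hprodi i).symm⟩
  have hle : ∀ i, Ideal.span {X ^ n - C lam} ≤ Ideal.span {f i} :=
    fun i => Ideal.span_singleton_le_span_singleton.2 (hdvd i)
  set p := fun i => Ideal.Quotient.factor (S := Ideal.span {X ^ n - C lam})
    (T := Ideal.span {f i}) (hle i) with hp
  have hpmk : ∀ i (a : R[X]), p i (mkA a) = Ideal.Quotient.mk (Ideal.span {f i}) a :=
    fun i a => Ideal.Quotient.factor_mk _ _
  have hpsurj : ∀ i, Function.Surjective (p i) := by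
    intro i z
    obtain ⟨a, rfl⟩ := Ideal.Quotient.mk_surjective z
    exact ⟨mkA a, hpmk i a⟩
  set γB : (i : Fin r) → R[X] ⧸ Ideal.span {f i} :=
    fun i => Ideal.Quotient.mk (Ideal.span {f i}) (C γ) with hγB
  have hcomp := fun i => auxCCUD_component hmax hnil hnil' (hmonic i) (hbasic i)
  have hpγ : ∀ i, p i γ' = γB i := fun i => hpmk i (C γ)
  have heid : ∀ i, e i * e i = e i := fun i => hidem i
  have hmkG : mkA (X ^ n - C lam) = 0 := Ideal.Quotient.eq_zero_iff_mem.2 (Ideal.subset_span rfl)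
  have hA : ∀ i, e i * mkA (f i) = 0 := by
    intro i
    obtain ⟨c, hc⟩ := Ideal.mem_span_singleton'.1 (hmem i)
    have h2 : mkA (∏ j ∈ Finset.univ.erase i, f j) * mkA (f i) = 0 := by
      rw [← map_mul, mul_comm, hprodi i, hmkG]
    calc e i * mkA (f i)
        = c * (mkA (∏ j ∈ Finset.univ.erase i, f j) * mkA (f i)) := by rw [← hc]; ring
      _ = 0 := by rw [h2, mul_zero]
  have hpe : ∀ i j, i ≠ j → p i (e j) = 0 := by
    intro i j hij
    obtain ⟨c, hc⟩ := Ideal.mem_span_singleton'.1 (hmem j)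
    rw [← hc, map_mul, hpmk]
    have h0 : Ideal.Quotient.mk (Ideal.span {f i}) (∏ k ∈ Finset.univ.erase j, f k) = 0 := by
      rw [Ideal.Quotient.eq_zero_iff_mem, Ideal.mem_span_singleton]
      exact Finset.dvd_prod_of_mem f (Finset.mem_erase.2 ⟨hij, Finset.mem_univ i⟩)
    rw [h0, mul_zero]
  have hpe1 : ∀ i, p i (e i) = 1 := by
    intro i
    have h1 := congrArg (p i) hsum
    rw [map_sum, map_one] at h1
    rwa [Finset.sum_eq_single i (fun j _ hj => hpe i j (Ne.symm hj)) (by simp)] at h1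
  have hker : ∀ i, ∀ x ∈ Ideal.span {e i}, p i x = 0 → x = 0 := by
    intro i x hx hpx
    obtain ⟨d, hd⟩ := Ideal.mem_span_singleton'.1 hx
    obtain ⟨a, ha⟩ := Ideal.Quotient.mk_surjective (I := Ideal.span {X ^ n - C lam}) x
    have h0 : Ideal.Quotient.mk (Ideal.span {f i}) a = 0 := by
      rw [← hpmk i a, ha]; exact hpx
    obtain ⟨u, hu⟩ := Ideal.mem_span_singleton.1 (Ideal.Quotient.eq_zero_iff_mem.1 h0)
    have hxe : e i * x = 0 := by
      rw [← ha, hu, map_mul, ← mul_assoc, hA i, zero_mul]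
    have hxe2 : e i * x = x := by
      rw [← hd, show e i * (d * e i) = d * (e i * e i) from by ring, heid i]
    rw [← hxe2, hxe]
  have hDmap : ∀ i m, Ideal.map (p i) (Ideal.span {γ' ^ m * e i})
      = Ideal.span {γB i ^ m} := by
    intro i m
    rw [Ideal.map_span, Set.image_singleton, map_mul, map_pow, hpγ i, hpe1 i, mul_one]
  have hspanle : ∀ i m, Ideal.span {γ' ^ m * e i} ≤ Ideal.span {e i} := by
    intro i m
    rw [Ideal.span_le, Set.singleton_subset_iff]
    exact Ideal.mem_span_singleton'.2 ⟨γ' ^ m, rfl⟩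
  have hcapmap : ∀ i, Ideal.map (p i) (Ccode ⊓ Ideal.span {e i})
      = Ideal.map (p i) Ccode := by
    intro i
    apply le_antisymm (Ideal.map_mono inf_le_left)
    intro y hy
    obtain ⟨x, hx, rfl⟩ := (Ideal.mem_map_iff_of_surjective _ (hpsurj i)).1 hy
    have hmem2 : e i * x ∈ Ccode ⊓ Ideal.span {e i} :=
      ⟨Ideal.mul_mem_left _ _ hx, Ideal.mem_span_singleton'.2 ⟨x, mul_comm _ _⟩⟩
    have h3 : p i (e i * x) = p i x := by rw [map_mul, hpe1, one_mul]
    exact h3 ▸ Ideal.mem_map_of_mem _ hmem2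
  have hchoose : ∀ i, ∃ m, m ≤ t ∧ Ideal.map (p i) Ccode = Ideal.span {γB i ^ m} :=
    fun i => (hcomp i).2.2 _
  choose s hst hs using hchoose
  have hkey : ∀ i, Ccode ⊓ Ideal.span {e i} = Ideal.span {γ' ^ s i * e i} := by
    intro i
    refine auxCCUD_ideal_eq_of_map_eq (p i) inf_le_right (hspanle i (s i))
      (hker i) (hpsurj i) ?_
    rw [hcapmap i, hs i, hDmap i]
  have hcap2 : ∀ (m : Fin r → ℕ), (Ccode = ⨆ j, Ideal.span {γ' ^ m j * e j}) →
      ∀ i, Ccode ⊓ Ideal.span {e i} = Ideal.span {γ' ^ m i * e i} := by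
    intro m hC i
    apply le_antisymm
    · rintro x ⟨hxC, hxe⟩
      have hsup : Ccode ≤ Ideal.span {γ' ^ m i * e i} ⊔ Ideal.span {1 - e i} := by
        rw [hC]
        apply iSup_le
        intro j
        rcases eq_or_ne j i with rfl | hji
        · exact le_sup_left
        · refine le_trans ?_ le_sup_right
          rw [Ideal.span_le, Set.singleton_subset_iff]
          refine Ideal.mem_span_singleton'.2 ⟨γ' ^ m j * e j, ?_⟩
          have hej : e j * (1 - e i) = e j := by
            rw [mul_sub, mul_one, horth j i hji, sub_zero]
          calc γ' ^ m j * e j * (1 - e i) = γ' ^ m j * (e j * (1 - e i)) := by ring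
            _ = γ' ^ m j * e j := by rw [hej]
      obtain ⟨a, haa, b, hbb, hab⟩ := Submodule.mem_sup.1 (hsup hxC)
      obtain ⟨w, hw⟩ := Ideal.mem_span_singleton'.1 hbb
      obtain ⟨cc, hcc⟩ := Ideal.mem_span_singleton'.1 haa
      obtain ⟨d, hd⟩ := Ideal.mem_span_singleton'.1 hxe
      have h1 : e i * x = x := by
        rw [← hd, show e i * (d * e i) = d * (e i * e i) from by ring, heid i]
      have h2 : e i * b = 0 := by
        rw [← hw, show e i * (w * (1 - e i)) = w * (e i * (1 - e i)) from by ring,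
          mul_sub, mul_one, heid i, sub_self, mul_zero]
      have h3 : e i * a = a := by
        rw [← hcc, show e i * (cc * (γ' ^ m i * e i)) = cc * (γ' ^ m i * (e i * e i))
          from by ring, heid i]
      have h4 : x = a := by rw [← h1, ← hab, mul_add, h2, add_zero, h3]
      rw [h4]; exact haa
    · refine le_inf ?_ (hspanle i (m i))
      rw [hC]
      exact le_iSup (fun j => Ideal.span {γ' ^ m j * e j}) i
  have hCdec : Ccode = ⨆ i, Ideal.span {γ' ^ s i * e i} := by
    apply le_antisymm
    · intro x hx
      have hxsum : x = ∑ j, e j * x := by rw [← Finset.sum_mul, hsum, one_mul]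
      rw [hxsum]
      apply Submodule.sum_mem
      intro j _
      have hj : e j * x ∈ Ideal.span {γ' ^ s j * e j} := by
        rw [← hkey j]
        exact ⟨Ideal.mul_mem_left _ _ hx, Ideal.mem_span_singleton'.2 ⟨x, mul_comm _ _⟩⟩
      exact (le_iSup (fun i => Ideal.span {γ' ^ s i * e i}) j) hj
    · apply iSup_le
      intro i
      rw [← hkey i]
      exact inf_le_left
  have hindep : iSupIndep (fun i => Ideal.span {γ' ^ s i * e i}) := by
    refine iSupIndep_def.2 fun i => ?_
    rw [disjoint_iff_inf_le]
    rintro x ⟨hx1, hx2⟩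
    have hle2 : (⨆ j, ⨆ (_ : j ≠ i), Ideal.span {γ' ^ s j * e j})
        ≤ Ideal.span {1 - e i} := by
      refine iSup_le fun j => iSup_le fun hji => ?_
      rw [Ideal.span_le, Set.singleton_subset_iff]
      refine Ideal.mem_span_singleton'.2 ⟨γ' ^ s j * e j, ?_⟩
      have hej : e j * (1 - e i) = e j := by
        rw [mul_sub, mul_one, horth j i hji, sub_zero]
      calc γ' ^ s j * e j * (1 - e i) = γ' ^ s j * (e j * (1 - e i)) := by ring
        _ = γ' ^ s j * e j := by rw [hej]
    obtain ⟨cc, hcc⟩ := Ideal.mem_span_singleton'.1 hx1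
    obtain ⟨w, hw⟩ := Ideal.mem_span_singleton'.1 (hle2 hx2)
    have h3 : e i * x = x := by
      rw [← hcc, show e i * (cc * (γ' ^ s i * e i)) = cc * (γ' ^ s i * (e i * e i))
        from by ring, heid i]
    have h2 : e i * x = 0 := by
      rw [← hw, show e i * (w * (1 - e i)) = w * (e i * (1 - e i)) from by ring,
        mul_sub, mul_one, heid i, sub_self, mul_zero]
    rw [Submodule.mem_bot, ← h3, h2]
  refine ⟨s, ⟨hst, hindep, hCdec⟩, ?_⟩
  intro s' hs'
  obtain ⟨hs't, -, hC'⟩ := hs'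
  funext i
  have h1 : Ccode ⊓ Ideal.span {e i} = Ideal.span {γ' ^ s' i * e i} := hcap2 s' hC' i
  have h2 : Ideal.span {γB i ^ s' i} = Ideal.span {γB i ^ s i} := by
    rw [← hDmap i (s' i), ← hDmap i (s i), ← h1, hkey i]
  exact auxCCUD_span_pow_inj (hcomp i).1 (hcomp i).2.1 (hs't i) (hst i) h2
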